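/- arXiv:1307.0992 — 2 statements merged into one kernel-verified Lean document; each statement's English description precedes it below -/
import Mathlib

section
/- Let G be a locally finite graph with exactly one end, which has finite vertex-degree. If G contains an infinite family of pairwise edge-disjoint 2-rays, then G contains an infinite family of pairwise edge-disjoint double rays. -/
open SimpleGraph

variable {V : Type*}

/-- A ray in `G`: an injective sequence of vertices with consecutive vertices adjacent. -/
def IsRay (G : SimpleGraph V) (f : ℕ → V) : Prop :=
  Function.Injective f ∧ ∀ n, G.Adj (f n) (f (n + 1))

/-- A double ray in `G`: an injective two-way infinite sequence with consecutive
vertices adjacent. -/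
def IsDoubleRay (G : SimpleGraph V) (f : ℤ → V) : Prop :=
  Function.Injective f ∧ ∀ n, G.Adj (f n) (f (n + 1))

/-- The edges used by a ray. -/
def rayEdges (f : ℕ → V) : Set (Sym2 V) := {e | ∃ n, e = s(f n, f (n + 1))}

/-- The edges used by a double ray. -/
def drEdges (f : ℤ → V) : Set (Sym2 V) := {e | ∃ n : ℤ, e = s(f n, f (n + 1))}

/-- Two rays are equivalent (belong to the same end) iff no finite vertex set
separates them: for every finite `S` there are tails of both rays avoiding `S`
which are joined by a walk avoiding `S`. -/
def RayEquiv (G : SimpleGraph V) (f g : ℕ → V) : Prop :=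
  ∀ S : Finset V, ∃ a b, (∀ i, a ≤ i → f i ∉ S) ∧ (∀ j, b ≤ j → g j ∉ S) ∧
    ∃ w : G.Walk (f a) (g b), ∀ v ∈ w.support, v ∉ S

/-- The forward ray of a double ray. -/
def drFwd (f : ℤ → V) : ℕ → V := fun n => f n

/-- The backward ray of a double ray. -/
def drBwd (f : ℤ → V) : ℕ → V := fun n => f (-(n : ℤ) - 1)

/-- The end (represented by the ray `R`) has vertex-degree exactly `k`:
there are `k` pairwise vertex-disjoint rays equivalent to `R`, but not `k + 1`. -/
def EndVertexDegree (G : SimpleGraph V) (R : ℕ → V) (k : ℕ) : Prop :=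
  (∃ F : Fin k → ℕ → V, (∀ i, IsRay G (F i) ∧ RayEquiv G R (F i)) ∧
      Pairwise fun i j => Disjoint (Set.range (F i)) (Set.range (F j))) ∧
  ¬ ∃ F : Fin (k + 1) → ℕ → V, (∀ i, IsRay G (F i) ∧ RayEquiv G R (F i)) ∧
      Pairwise fun i j => Disjoint (Set.range (F i)) (Set.range (F j))

/-- A `2`-ray: an ordered pair of vertex-disjoint rays. -/
def Is2Ray (G : SimpleGraph V) (p : (ℕ → V) × (ℕ → V)) : Prop :=
  IsRay G p.1 ∧ IsRay G p.2 ∧ Disjoint (Set.range p.1) (Set.range p.2)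

/-- The edges used by a `2`-ray. -/
def twoRayEdges (p : (ℕ → V) × (ℕ → V)) : Set (Sym2 V) := rayEdges p.1 ∪ rayEdges p.2


namespace DRProof

open Set Function

/-- enumeration of a set of naturals -/
noncomputable def enumOf (S : Set ℕ) : ℕ → ℕ
  | 0 => sInf S
  | n+1 => sInf {m | m ∈ S ∧ enumOf S n < m}

lemma enumOf_mem {S : Set ℕ} (hS : S.Infinite) : ∀ n, enumOf S n ∈ S ∧ enumOf S n < enumOf S (n+1) := by
  have key : ∀ a : ℕ, {m | m ∈ S ∧ a < m}.Nonempty := by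
    intro a
    obtain ⟨b, hb, hab⟩ := hS.exists_gt a
    exact ⟨b, hb, hab⟩
  intro n
  induction n with
  | zero =>
    constructor
    · exact Nat.sInf_mem hS.nonempty
    · have := Nat.sInf_mem (key (enumOf S 0))
      exact this.2
  | succ k ih =>
    have h1 : enumOf S (k+1) ∈ {m | m ∈ S ∧ enumOf S k < m} := Nat.sInf_mem (key _)
    refine ⟨h1.1, ?_⟩
    have := Nat.sInf_mem (key (enumOf S (k+1)))
    exact this.2

lemma enumOf_strictMono {S : Set ℕ} (hS : S.Infinite) : StrictMono (enumOf S) :=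
  strictMono_nat_of_lt_succ (fun n => (enumOf_mem hS n).2)

lemma enumOf_mem' {S : Set ℕ} (hS : S.Infinite) (n : ℕ) : enumOf S n ∈ S :=
  (enumOf_mem hS n).1

/-- infinite pigeonhole -/
lemma inf_pigeon {C : Type*} [Finite C] {S : Set ℕ} (hS : S.Infinite) (c : ℕ → C) :
    ∃ d, {n | n ∈ S ∧ c n = d}.Infinite := by
  by_contra hcon
  push_neg at hcon
  have : S ⊆ ⋃ d : C, {n | n ∈ S ∧ c n = d} := by
    intro n hn; exact Set.mem_iUnion.2 ⟨c n, hn, rfl⟩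
  exact hS ((Set.finite_iUnion hcon).subset this)

/-- infinite Ramsey theorem for pairs -/
lemma ramsey2 {C : Type*} [Finite C] [Nonempty C] (c : ℕ → ℕ → C) :
    ∃ g : ℕ → ℕ, StrictMono g ∧ ∃ d, ∀ i j, i < j → c (g i) (g j) = d := by
  classical
  have exstep : ∀ T : Set ℕ, ∃ q : Set ℕ × C, T.Infinite →
      (q.1.Infinite ∧ q.1 ⊆ T ∧ ∀ x ∈ q.1, sInf T < x ∧ c (sInf T) x = q.2) := by
    intro T
    by_cases hT : T.Infinite
    · have hgt : ({n | n ∈ T ∧ sInf T < n}).Infinite := by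
        have heq : {n | n ∈ T ∧ sInf T < n} = T \ {n | n ≤ sInf T} := by
          ext x
          constructor
          · rintro ⟨h1, h2⟩
            refine ⟨h1, ?_⟩
            simp only [Set.mem_setOf_eq, not_le]
            exact h2
          · rintro ⟨h1, h2⟩
            simp only [Set.mem_setOf_eq, not_le] at h2
            exact ⟨h1, h2⟩
        rw [heq]
        exact hT.diff (Set.finite_Iic (sInf T))
      obtain ⟨d, hd⟩ := inf_pigeon hgt (c (sInf T))
      refine ⟨({n | (n ∈ T ∧ sInf T < n) ∧ c (sInf T) n = d}, d), fun _ => ⟨hd, ?_, ?_⟩⟩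
      · intro x hx; exact hx.1.1
      · intro x hx; exact ⟨hx.1.2, hx.2⟩
    · exact ⟨(∅, Classical.arbitrary C), fun h => absurd h hT⟩
  let step : Set ℕ → Set ℕ × C := fun T => Classical.choose (exstep T)
  have step_spec : ∀ T : Set ℕ, T.Infinite →
      ((step T).1.Infinite ∧ (step T).1 ⊆ T ∧
        ∀ x ∈ (step T).1, sInf T < x ∧ c (sInf T) x = (step T).2) :=
    fun T hT => Classical.choose_spec (exstep T) hT
  let seq : ℕ → Set ℕ × C := fun n =>
    Nat.rec ((Set.univ : Set ℕ), Classical.arbitrary C)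
      (fun _ prev => step prev.1) n
  have hseq : ∀ n, seq (n+1) = step (seq n).1 := fun n => rfl
  have hinf : ∀ n, (seq n).1.Infinite := by
    intro n
    induction n with
    | zero => exact Set.infinite_univ
    | succ k ih =>
      rw [hseq k]
      exact (step_spec _ ih).1
  have hsub : ∀ n, (seq (n+1)).1 ⊆ (seq n).1 := by
    intro n; rw [hseq n]; exact (step_spec _ (hinf n)).2.1
  -- pivots
  set p : ℕ → ℕ := fun n => sInf (seq n).1 with hp
  have hprop : ∀ n, ∀ x ∈ (seq (n+1)).1, p n < x ∧ c (p n) x = (seq (n+1)).2 := by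
    intro n x hx
    rw [hseq n] at hx
    have := (step_spec _ (hinf n)).2.2 x hx
    rw [hseq n]
    exact this
  have hmemT : ∀ n, p n ∈ (seq n).1 := fun n => Nat.sInf_mem (hinf n).nonempty
  have hchain : ∀ m n, m ≤ n → (seq n).1 ⊆ (seq m).1 := by
    intro m n hmn
    induction n with
    | zero => have : m = 0 := by omega
              subst this; exact subset_rfl
    | succ k ih =>
      rcases Nat.lt_or_ge m (k+1) with h | h
      · exact (hsub k).trans (ih (by omega))
      · have : m = k+1 := by omega
        subst this; exact subset_rfl
  have hcolor : ∀ i j, i < j → c (p i) (p j) = (seq (i+1)).2 := by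
    intro i j hij
    have : p j ∈ (seq (i+1)).1 := hchain (i+1) j (by omega) (hmemT j)
    exact (hprop i (p j) this).2
  have hmono : StrictMono p := by
    apply strictMono_nat_of_lt_succ
    intro n
    have h1 : p (n+1) ∈ (seq (n+1)).1 := hmemT (n+1)
    exact (hprop n _ h1).1
  -- pigeonhole on colors
  obtain ⟨d, hd⟩ := inf_pigeon (Set.infinite_univ : (Set.univ : Set ℕ).Infinite)
    (fun n => (seq (n+1)).2)
  refine ⟨p ∘ enumOf {n | n ∈ Set.univ ∧ (seq (n+1)).2 = d}, ?_, d, ?_⟩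
  · exact hmono.comp (enumOf_strictMono hd)
  · intro i j hij
    have h1 := enumOf_mem' hd i
    have h2 : enumOf {n | n ∈ Set.univ ∧ (seq (n+1)).2 = d} i <
        enumOf {n | n ∈ Set.univ ∧ (seq (n+1)).2 = d} j := enumOf_strictMono hd hij
    simp only [Function.comp]
    rw [hcolor _ _ h2]
    exact h1.2


section GraphLemmas

variable {G : SimpleGraph V}

lemma isRay_tail {f : ℕ → V} (hf : IsRay G f) (a : ℕ) : IsRay G (fun n => f (a + n)) := by
  constructor
  · intro x y hxy
    have := hf.1 hxy
    omega
  · intro n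
    have := hf.2 (a + n)
    simpa [Nat.add_assoc] using this

lemma rayEdges_tail_subset {f : ℕ → V} (a : ℕ) :
    rayEdges (fun n => f (a + n)) ⊆ rayEdges f := by
  rintro e ⟨n, rfl⟩
  exact ⟨a + n, by simp [Nat.add_assoc]⟩

lemma range_tail_subset {f : ℕ → V} (a : ℕ) :
    Set.range (fun n => f (a + n)) ⊆ Set.range f := by
  rintro x ⟨n, rfl⟩; exact ⟨a + n, rfl⟩

lemma rayEdges_endpoints {f : ℕ → V} {u v : V} (h : s(u, v) ∈ rayEdges f) :
    u ∈ Set.range f ∧ v ∈ Set.range f := by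
  obtain ⟨n, hn⟩ := h
  rw [Sym2.eq_iff] at hn
  rcases hn with ⟨h1, h2⟩ | ⟨h1, h2⟩
  · exact ⟨⟨n, h1.symm⟩, ⟨n+1, h2.symm⟩⟩
  · exact ⟨⟨n+1, h1.symm⟩, ⟨n, h2.symm⟩⟩

/-- gluing two rays sharing exactly their origin into a double ray -/
lemma glue0 {A B : ℕ → V} (hA : IsRay G A) (hB : IsRay G B) (h0 : A 0 = B 0)
    (hAB : ∀ s t, A s = B t → s = 0 ∧ t = 0) :
    ∃ f : ℤ → V, IsDoubleRay G f ∧ drEdges f ⊆ rayEdges A ∪ rayEdges B := by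
  refine ⟨fun z => if z ≤ 0 then A (-z).toNat else B z.toNat, ⟨?_, ?_⟩, ?_⟩
  · intro z w hzw
    by_cases hz : z ≤ 0 <;> by_cases hw : w ≤ 0 <;>
      simp only [hz, hw, if_true, if_false, reduceIte] at hzw
    · have := hA.1 hzw; omega
    · obtain ⟨h1, h2⟩ := hAB _ _ hzw; omega
    · obtain ⟨h1, h2⟩ := hAB _ _ hzw.symm; omega
    · have := hB.1 hzw; omega
  · intro n
    rcases lt_trichotomy n 0 with hn | hn | hn
    · have h1 : n ≤ 0 := by omega
      have h2 : n + 1 ≤ 0 := by omega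
      simp only [h1, h2, if_true, reduceIte]
      have he : (-n).toNat = (-(n+1)).toNat + 1 := by omega
      rw [he]
      exact (hA.2 _).symm
    · subst hn
      simp only [if_true, reduceIte]
      norm_num
      rw [h0]
      exact hB.2 0
    · have h1 : ¬ (n ≤ 0) := by omega
      have h2 : ¬ (n + 1 ≤ 0) := by omega
      simp only [h1, h2, if_false, reduceIte]
      have he : (n+1).toNat = n.toNat + 1 := by omega
      rw [he]
      exact hB.2 _
  · rintro e ⟨n, rfl⟩
    rcases lt_trichotomy n 0 with hn | hn | hn
    · have h1 : n ≤ 0 := by omega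
      have h2 : n + 1 ≤ 0 := by omega
      simp only [h1, h2, if_true, reduceIte]
      left
      have he : (-n).toNat = (-(n+1)).toNat + 1 := by omega
      rw [he]
      exact ⟨(-(n+1)).toNat, Sym2.eq_swap⟩
    · subst hn
      right
      simp only [if_true, reduceIte]
      norm_num
      rw [h0]
      exact ⟨0, rfl⟩
    · have h1 : ¬ (n ≤ 0) := by omega
      have h2 : ¬ (n + 1 ≤ 0) := by omega
      simp only [h1, h2, if_false, reduceIte]
      right
      have he : (n+1).toNat = n.toNat + 1 := by omega
      rw [he]
      exact ⟨n.toNat, rfl⟩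

/-- gluing ray + path + ray into a double ray -/
lemma glueP {A B : ℕ → V} (hA : IsRay G A) (hB : IsRay G B) {L : ℕ} (hL : 0 < L)
    {p : ℕ → V} (hadj : ∀ i < L, G.Adj (p i) (p (i+1)))
    (hpinj : ∀ i ≤ L, ∀ j ≤ L, p i = p j → i = j)
    (hp0 : p 0 = A 0) (hpL : p L = B 0)
    (hpA : ∀ i, 0 < i → i ≤ L → p i ∉ Set.range A)
    (hpB : ∀ i, i < L → p i ∉ Set.range B)
    (hABd : Disjoint (Set.range A) (Set.range B)) :
    ∃ f : ℤ → V, IsDoubleRay G f ∧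
      drEdges f ⊆ (rayEdges A ∪ rayEdges B) ∪ {e | ∃ i, i < L ∧ e = s(p i, p (i+1))} := by
  have hAp : ∀ (t : ℕ) (i : ℕ), 1 ≤ t → i ≤ L → A t ≠ p i := by
    intro t i ht hi heq
    rcases Nat.eq_zero_or_pos i with h0 | h0
    · subst h0
      rw [hp0] at heq
      have := hA.1 heq
      omega
    · exact hpA i h0 hi ⟨t, heq⟩
  have hBp : ∀ (s : ℕ) (i : ℕ), 1 ≤ s → i ≤ L → B s ≠ p i := by
    intro s i hs hi heq
    rcases Nat.lt_or_ge i L with h0 | h0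
    · exact hpB i h0 ⟨s, heq⟩
    · have : i = L := by omega
      subst this
      rw [hpL] at heq
      have := hB.1 heq
      omega
  have hABne : ∀ t s, A t ≠ B s := by
    intro t s heq
    exact Set.disjoint_left.1 hABd ⟨t, rfl⟩ ⟨s, heq.symm⟩
  refine ⟨fun z => if z < 0 then A (-z).toNat else if z ≤ (L : ℤ) then p z.toNat
    else B (z - L).toNat, ⟨?_, ?_⟩, ?_⟩
  · intro z w hzw
    simp only at hzw
    by_cases hz0 : z < 0 <;> by_cases hw0 : w < 0
    · rw [if_pos hz0, if_pos hw0] at hzw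
      have := hA.1 hzw
      omega
    · rw [if_pos hz0, if_neg hw0] at hzw
      by_cases hwL : w ≤ (L : ℤ)
      · rw [if_pos hwL] at hzw
        exact absurd hzw (hAp _ _ (by omega) (by omega))
      · rw [if_neg hwL] at hzw
        exact absurd hzw (hABne _ _)
    · rw [if_neg hz0, if_pos hw0] at hzw
      by_cases hzL : z ≤ (L : ℤ)
      · rw [if_pos hzL] at hzw
        exact absurd hzw.symm (hAp _ _ (by omega) (by omega))
      · rw [if_neg hzL] at hzw
        exact absurd hzw.symm (hABne _ _)
    · rw [if_neg hz0, if_neg hw0] at hzw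
      by_cases hzL : z ≤ (L : ℤ) <;> by_cases hwL : w ≤ (L : ℤ)
      · rw [if_pos hzL, if_pos hwL] at hzw
        have := hpinj _ (by omega) _ (by omega) hzw
        omega
      · rw [if_pos hzL, if_neg hwL] at hzw
        exact absurd hzw.symm (hBp _ _ (by omega) (by omega))
      · rw [if_neg hzL, if_pos hwL] at hzw
        exact absurd hzw (hBp _ _ (by omega) (by omega))
      · rw [if_neg hzL, if_neg hwL] at hzw
        have := hB.1 hzw
        omega
  · intro n
    simp only
    rcases lt_trichotomy n (-1 : ℤ) with hn | hn | hn
    · rw [if_pos (by omega : n < 0), if_pos (by omega : n + 1 < 0)]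
      have he : (-n).toNat = (-(n+1)).toNat + 1 := by omega
      rw [he]
      exact (hA.2 _).symm
    · subst hn
      rw [if_pos (by omega : (-1 : ℤ) < 0), if_neg (by omega : ¬ (-1 + 1 : ℤ) < 0),
        if_pos (by omega : (-1 + 1 : ℤ) ≤ (L : ℤ))]
      have h1 : ((1 : ℤ)).toNat = 1 := rfl
      have h2 : ((-1 + 1 : ℤ)).toNat = 0 := rfl
      rw [show (-(-1) : ℤ).toNat = 1 from rfl, h2, hp0]
      exact (hA.2 0).symm
    · rcases lt_trichotomy n (L : ℤ) with hnL | hnL | hnL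
      · rw [if_neg (by omega : ¬ n < 0), if_neg (by omega : ¬ n + 1 < 0),
          if_pos (by omega : n ≤ (L : ℤ)), if_pos (by omega : n + 1 ≤ (L : ℤ))]
        have he : (n+1).toNat = n.toNat + 1 := by omega
        rw [he]
        exact hadj n.toNat (by omega)
      · subst hnL
        rw [if_neg (by omega : ¬ (L : ℤ) < 0), if_neg (by omega : ¬ (L : ℤ) + 1 < 0),
          if_pos (le_refl (L : ℤ)), if_neg (by omega : ¬ (L : ℤ) + 1 ≤ (L : ℤ))]
        have h1 : ((L : ℤ)).toNat = L := by omega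
        have h2 : ((L : ℤ) + 1 - L).toNat = 1 := by omega
        rw [h1, h2, hpL]
        exact hB.2 0
      · rw [if_neg (by omega : ¬ n < 0), if_neg (by omega : ¬ n + 1 < 0),
          if_neg (by omega : ¬ n ≤ (L : ℤ)), if_neg (by omega : ¬ n + 1 ≤ (L : ℤ))]
        have he : (n + 1 - L).toNat = (n - L).toNat + 1 := by omega
        rw [he]
        exact hB.2 _
  · rintro e ⟨n, rfl⟩
    simp only
    rcases lt_trichotomy n (-1 : ℤ) with hn | hn | hn
    · rw [if_pos (by omega : n < 0), if_pos (by omega : n + 1 < 0)]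
      left; left
      have he : (-n).toNat = (-(n+1)).toNat + 1 := by omega
      rw [he]
      exact ⟨(-(n+1)).toNat, Sym2.eq_swap⟩
    · subst hn
      rw [if_pos (by omega : (-1 : ℤ) < 0), if_neg (by omega : ¬ (-1 + 1 : ℤ) < 0),
        if_pos (by omega : (-1 + 1 : ℤ) ≤ (L : ℤ))]
      left; left
      rw [show (-(-1) : ℤ).toNat = 1 from rfl, show ((-1 + 1 : ℤ)).toNat = 0 from rfl, hp0]
      exact ⟨0, Sym2.eq_swap⟩
    · rcases lt_trichotomy n (L : ℤ) with hnL | hnL | hnL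
      · rw [if_neg (by omega : ¬ n < 0), if_neg (by omega : ¬ n + 1 < 0),
          if_pos (by omega : n ≤ (L : ℤ)), if_pos (by omega : n + 1 ≤ (L : ℤ))]
        right
        have he : (n+1).toNat = n.toNat + 1 := by omega
        rw [he]
        exact ⟨n.toNat, by omega, rfl⟩
      · subst hnL
        rw [if_neg (by omega : ¬ (L : ℤ) < 0), if_neg (by omega : ¬ (L : ℤ) + 1 < 0),
          if_pos (le_refl (L : ℤ)), if_neg (by omega : ¬ (L : ℤ) + 1 ≤ (L : ℤ))]
        left; right
        have h1 : ((L : ℤ)).toNat = L := by omega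
        have h2 : ((L : ℤ) + 1 - L).toNat = 1 := by omega
        rw [h1, h2, hpL]
        exact ⟨0, rfl⟩
      · rw [if_neg (by omega : ¬ n < 0), if_neg (by omega : ¬ n + 1 < 0),
          if_neg (by omega : ¬ n ≤ (L : ℤ)), if_neg (by omega : ¬ n + 1 ≤ (L : ℤ))]
        left; right
        have he : (n + 1 - L).toNat = (n - L).toNat + 1 := by omega
        rw [he]
        exact ⟨(n - L).toNat, rfl⟩

/-- extraction of a crossing subpath -/
lemma extract {X Y : Set V} (hXY : Disjoint X Y) {p : ℕ → V} {L : ℕ}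
    (h0 : p 0 ∈ X) (hLY : p L ∈ Y) :
    ∃ m m', m < m' ∧ m' ≤ L ∧ p m ∈ X ∧ p m' ∈ Y ∧
      (∀ i, m < i → i ≤ L → p i ∉ X) ∧ (∀ i, m ≤ i → i < m' → p i ∉ Y) := by
  classical
  set P : ℕ → Prop := fun i => p i ∈ X with hP
  set m := Nat.findGreatest P L with hm
  have hmX : P m := Nat.findGreatest_spec (P := P) (Nat.zero_le L) h0
  have hmL : m ≤ L := Nat.findGreatest_le L
  have hmax : ∀ i, m < i → i ≤ L → ¬ P i := by
    intro i h1 h2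
    exact Nat.findGreatest_is_greatest h1 h2
  have hmne : m ≠ L := by
    intro hcon
    rw [hcon] at hmX
    exact Set.disjoint_left.1 hXY hmX hLY
  have hex : ∃ i, m < i ∧ p i ∈ Y := ⟨L, by omega, hLY⟩
  set m' := Nat.find hex with hm'
  obtain ⟨hmm', hm'Y⟩ := Nat.find_spec hex
  have hm'L : m' ≤ L := Nat.find_min' hex ⟨by omega, hLY⟩
  refine ⟨m, m', hmm', hm'L, hmX, hm'Y, hmax, ?_⟩
  intro i h1 h2
  rcases Nat.eq_or_lt_of_le h1 with h3 | h3
  · rw [← h3]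
    intro hcon
    exact Set.disjoint_left.1 hXY hmX hcon
  · intro hcon
    exact Nat.find_min hex h2 ⟨h3, hcon⟩

/-- a segment of a ray, traversed in either direction, as a finite path -/
lemma raySegPath {f : ℕ → V} (hf : IsRay G f) (p1 p2 : ℕ) :
    ∃ (L : ℕ) (q : ℕ → V), q 0 = f p1 ∧ q L = f p2 ∧ (∀ i < L, G.Adj (q i) (q (i+1))) ∧
      (∀ i ≤ L, ∀ j ≤ L, q i = q j → i = j) ∧ (∀ i ≤ L, q i ∈ Set.range f) ∧
      (∀ i < L, s(q i, q (i+1)) ∈ rayEdges f) := by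
  rcases le_total p1 p2 with h | h
  · refine ⟨p2 - p1, fun i => f (p1 + i), by simp, by simp [show p1 + (p2 - p1) = p2 by omega],
      ?_, ?_, ?_, ?_⟩
    · intro i hi
      have := hf.2 (p1 + i)
      simpa [Nat.add_assoc] using this
    · intro i hi j hj hij
      have := hf.1 hij
      omega
    · intro i hi
      exact ⟨p1 + i, rfl⟩
    · intro i hi
      exact ⟨p1 + i, by simp [Nat.add_assoc]⟩
  · refine ⟨p1 - p2, fun i => f (p1 - i), by simp, by simp [show p1 - (p1 - p2) = p2 by omega],
      ?_, ?_, ?_, ?_⟩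
    · intro i hi
      have := hf.2 (p1 - i - 1)
      have he : p1 - i - 1 + 1 = p1 - i := by omega
      rw [he] at this
      have he2 : p1 - (i + 1) = p1 - i - 1 := by omega
      show G.Adj (f (p1 - i)) (f (p1 - (i + 1)))
      rw [he2]
      exact this.symm
    · intro i hi j hj hij
      have := hf.1 hij
      omega
    · intro i hi
      exact ⟨p1 - i, rfl⟩
    · intro i hi
      have he : p1 - i = p1 - (i+1) + 1 := by omega
      refine ⟨p1 - (i + 1), ?_⟩
      show s(f (p1 - i), f (p1 - (i + 1))) = _
      rw [he]
      exact Sym2.eq_swap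

/-- switching from one ray to another at the first meeting point -/
lemma raySwitch {U F : ℕ → V} (hU : IsRay G U) (hF : IsRay G F) {a i q : ℕ}
    (hai : a ≤ i) (hq : U i = F q) (hmin : ∀ l, a ≤ l → l < i → U l ∉ Set.range F) :
    ∃ A : ℕ → V, IsRay G A ∧ A 0 = U a ∧
      rayEdges A ⊆ {e | ∃ l, a ≤ l ∧ l < i ∧ e = s(U l, U (l+1))} ∪ rayEdges F ∧
      Set.range A ⊆ Set.range U ∪ Set.range F := by
  refine ⟨fun n => if a + n ≤ i then U (a + n) else F (q + (a + n - i)), ⟨?_, ?_⟩, ?_, ?_, ?_⟩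
  · intro x y hxy
    simp only at hxy
    by_cases hx : a + x ≤ i <;> by_cases hy : a + y ≤ i
    · rw [if_pos hx, if_pos hy] at hxy
      have := hU.1 hxy
      omega
    · rw [if_pos hx, if_neg hy] at hxy
      rcases Nat.lt_or_ge (a + x) i with h1 | h1
      · exact absurd ⟨_, hxy.symm⟩ (hmin _ (by omega) h1)
      · have : a + x = i := by omega
        rw [this, hq] at hxy
        have := hF.1 hxy
        omega
    · rw [if_neg hx, if_pos hy] at hxy
      rcases Nat.lt_or_ge (a + y) i with h1 | h1
      · exact absurd ⟨_, hxy⟩ (hmin _ (by omega) h1)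
      · have : a + y = i := by omega
        rw [this, hq] at hxy
        have := hF.1 hxy.symm
        omega
    · rw [if_neg hx, if_neg hy] at hxy
      have := hF.1 hxy
      omega
  · intro n
    simp only
    rcases Nat.lt_or_ge (a + n + 1) (i + 1) with h1 | h1
    · rw [if_pos (by omega : a + n ≤ i), if_pos (by omega : a + (n+1) ≤ i),
        show a + (n + 1) = a + n + 1 by omega]
      exact hU.2 _
    · rcases Nat.eq_or_lt_of_le h1 with h2 | h2
      · rw [if_pos (by omega : a + n ≤ i), if_neg (by omega : ¬ a + (n+1) ≤ i),
          show a + n = i by omega, show q + (a + (n+1) - i) = q + 1 by omega, hq]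
        exact hF.2 _
      · rw [if_neg (by omega : ¬ a + n ≤ i), if_neg (by omega : ¬ a + (n+1) ≤ i),
          show q + (a + (n+1) - i) = q + (a + n - i) + 1 by omega]
        exact hF.2 _
  · simp only [Nat.add_zero, if_pos hai]
  · rintro e ⟨n, rfl⟩
    simp only
    rcases Nat.lt_or_ge (a + n + 1) (i + 1) with h1 | h1
    · rw [if_pos (by omega : a + n ≤ i), if_pos (by omega : a + (n+1) ≤ i),
        show a + (n + 1) = a + n + 1 by omega]
      exact Or.inl ⟨a + n, by omega, by omega, rfl⟩
    · rcases Nat.eq_or_lt_of_le h1 with h2 | h2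
      · rw [if_pos (by omega : a + n ≤ i), if_neg (by omega : ¬ a + (n+1) ≤ i),
          show a + n = i by omega, show q + (a + (n+1) - i) = q + 1 by omega, hq]
        exact Or.inr ⟨q, rfl⟩
      · rw [if_neg (by omega : ¬ a + n ≤ i), if_neg (by omega : ¬ a + (n+1) ≤ i),
          show q + (a + (n+1) - i) = q + (a + n - i) + 1 by omega]
        exact Or.inr ⟨q + (a + n - i), rfl⟩
  · rintro x ⟨n, rfl⟩
    simp only
    by_cases hx : a + n ≤ i
    · rw [if_pos hx]; exact Or.inl ⟨a + n, rfl⟩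
    · rw [if_neg hx]; exact Or.inr ⟨q + (a + n - i), rfl⟩

lemma getVert_inj_of_isPath : ∀ {u v : V} (w : G.Walk u v), w.IsPath →
    ∀ i ≤ w.length, ∀ j ≤ w.length, w.getVert i = w.getVert j → i = j := by
  intro u v w
  induction w with
  | nil =>
    intro _ i hi j hj _
    simp only [Walk.length_nil, Nat.le_zero] at hi hj
    omega
  | @cons a b c hadj q ih =>
    intro hp i hi j hj hij
    rw [Walk.cons_isPath_iff] at hp
    match i, j with
    | 0, 0 => rfl
    | 0, j+1 =>
      exfalso
      rw [Walk.getVert_zero, Walk.getVert_cons_succ] at hij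
      apply hp.2
      rw [Walk.mem_support_iff_exists_getVert]
      exact ⟨j, hij.symm, by simpa [Walk.length_cons] using hj⟩
    | i+1, 0 =>
      exfalso
      rw [Walk.getVert_zero, Walk.getVert_cons_succ] at hij
      apply hp.2
      rw [Walk.mem_support_iff_exists_getVert]
      exact ⟨i, hij, by simpa [Walk.length_cons] using hi⟩
    | i+1, j+1 =>
      rw [Walk.getVert_cons_succ, Walk.getVert_cons_succ] at hij
      have := ih hp.1 i (by simpa [Walk.length_cons] using hi) j
        (by simpa [Walk.length_cons] using hj) hij
      omega

/-- a walk gives an injective finite path visiting a subset of its support -/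
lemma walk_to_finpath [DecidableEq V] {u v : V} (w : G.Walk u v) :
    ∃ (L : ℕ) (p : ℕ → V), p 0 = u ∧ p L = v ∧ (∀ i < L, G.Adj (p i) (p (i+1))) ∧
      (∀ i ≤ L, ∀ j ≤ L, p i = p j → i = j) ∧ (∀ i ≤ L, p i ∈ w.support) := by
  refine ⟨w.bypass.length, w.bypass.getVert, Walk.getVert_zero _, Walk.getVert_length _,
    ?_, ?_, ?_⟩
  · intro i hi
    exact Walk.adj_getVert_succ _ hi
  · intro i hi j hj hij
    exact getVert_inj_of_isPath w.bypass (Walk.bypass_isPath w) i hi j hj hij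
  · intro i hi
    apply Walk.support_bypass_subset
    rw [Walk.mem_support_iff_exists_getVert]
    exact ⟨i, rfl, hi⟩

/-- a walk along a segment of a ray -/
lemma raySegWalk {f : ℕ → V} (hadj : ∀ n, G.Adj (f n) (f (n + 1))) (a : ℕ) :
    ∀ d : ℕ, ∃ w : G.Walk (f a) (f (a + d)), ∀ x ∈ w.support, ∃ i, a ≤ i ∧ i ≤ a + d ∧ x = f i := by
  intro d
  induction d with
  | zero =>
    refine ⟨Walk.nil.copy rfl (by rw [Nat.add_zero]), ?_⟩
    intro x hx
    rw [Walk.support_copy, Walk.support_nil] at hx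
    simp only [List.mem_singleton] at hx
    exact ⟨a, le_refl a, by omega, hx⟩
  | succ k ih =>
    obtain ⟨w, hw⟩ := ih
    refine ⟨(w.append (Walk.cons (hadj (a + k)) Walk.nil)).copy rfl (by rw [Nat.add_assoc]), ?_⟩
    intro x hx
    rw [Walk.support_copy, Walk.mem_support_append_iff] at hx
    rcases hx with hx | hx
    · obtain ⟨i, h1, h2, h3⟩ := hw x hx
      exact ⟨i, h1, by omega, h3⟩
    · rw [Walk.support_cons, Walk.support_nil] at hx
      simp only [List.mem_cons, List.mem_singleton] at hx
      rcases hx with hx | hx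
      · exact ⟨a + k, by omega, by omega, hx⟩
      · rcases hx with hx | hx
        · exact ⟨a + k + 1, by omega, by omega, hx⟩
        · exact absurd hx List.not_mem_nil

/-- connecting two rays by a walk avoiding a finite vertex set -/
lemma connect {W : ℕ → V} (hW : IsRay G W)
    (hone : ∀ f : ℕ → V, IsRay G f → RayEquiv G W f)
    {f g : ℕ → V} (hf : IsRay G f) (hg : IsRay G g) (Z : Finset V) :
    ∃ a b, ∃ w : G.Walk (f a) (g b), ∀ x ∈ w.support, x ∉ Z := by
  obtain ⟨a1, b1, hW1, hf1, w1, hw1⟩ := hone f hf Z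
  obtain ⟨a2, b2, hW2, hg2, w2, hw2⟩ := hone g hg Z
  have hseg : ∃ w0 : G.Walk (W a1) (W a2), ∀ x ∈ w0.support, x ∉ Z := by
    rcases le_total a1 a2 with h | h
    · obtain ⟨w0, hw0⟩ := raySegWalk hW.2 a1 (a2 - a1)
      refine ⟨w0.copy rfl (by rw [show a1 + (a2 - a1) = a2 by omega]), ?_⟩
      intro x hx
      rw [Walk.support_copy] at hx
      obtain ⟨i, h1, h2, h3⟩ := hw0 x hx
      rw [h3]
      exact hW1 i h1
    · obtain ⟨w0, hw0⟩ := raySegWalk hW.2 a2 (a1 - a2)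
      refine ⟨(w0.copy rfl (by rw [show a2 + (a1 - a2) = a1 by omega])).reverse, ?_⟩
      intro x hx
      rw [Walk.support_reverse, List.mem_reverse, Walk.support_copy] at hx
      obtain ⟨i, h1, h2, h3⟩ := hw0 x hx
      rw [h3]
      exact hW2 i h1
  obtain ⟨w0, hw0⟩ := hseg
  refine ⟨b1, b2, (w1.reverse.append w0).append w2, ?_⟩
  intro x hx
  rw [Walk.mem_support_append_iff, Walk.mem_support_append_iff, Walk.support_reverse,
    List.mem_reverse] at hx
  rcases hx with (hx | hx) | hx
  · exact hw1 x hx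
  · exact hw0 x hx
  · exact hw2 x hx


/-- from an infinite intersection of ranges: meeting points beyond any position -/
lemma inter_unbounded {f g : ℕ → V} (hf : Function.Injective f)
    (hinter : (Set.range f ∩ Set.range g).Infinite) (N : ℕ) :
    ∃ n q, N ≤ n ∧ f n = g q := by
  have hsub : (Set.range f ∩ Set.range g) ⊆ Set.range f := Set.inter_subset_left
  have hpre : (f ⁻¹' (Set.range f ∩ Set.range g)).Infinite := by
    apply Set.Infinite.preimage hinter hsub
  obtain ⟨n, hn, hNn⟩ := hpre.exists_gt N
  obtain ⟨q, hq⟩ := hn.2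
  exact ⟨n, q, by omega, hq.symm⟩

/-- a finite nonempty intersection of two rays yields a double ray in their union -/
lemma caseFin {U T : ℕ → V} (hU : IsRay G U) (hT : IsRay G T)
    (hfin : (Set.range U ∩ Set.range T).Finite)
    (hne : (Set.range U ∩ Set.range T).Nonempty) :
    ∃ f, IsDoubleRay G f ∧ drEdges f ⊆ rayEdges U ∪ rayEdges T := by
  classical
  have hPfin : {n | U n ∈ Set.range T}.Finite := by
    have : {n | U n ∈ Set.range T} = U ⁻¹' (Set.range U ∩ Set.range T) := by
      ext n; simp [Set.mem_preimage]
    rw [this]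
    exact Set.Finite.preimage (Set.injOn_of_injective hU.1) hfin
  have hPne : {n | U n ∈ Set.range T}.Nonempty := by
    obtain ⟨x, ⟨n, hn⟩, hx2⟩ := hne
    exact ⟨n, by rw [Set.mem_setOf_eq, hn]; exact hx2⟩
  set pu := hPfin.toFinset.max' (by rwa [Set.Finite.toFinset_nonempty]) with hpu
  have hpumem : U pu ∈ Set.range T := by
    have := hPfin.toFinset.max'_mem (by rwa [Set.Finite.toFinset_nonempty])
    rw [Set.Finite.mem_toFinset] at this
    exact this
  have hpumax : ∀ n, U n ∈ Set.range T → n ≤ pu := by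
    intro n hn
    exact hPfin.toFinset.le_max' n (by rwa [Set.Finite.mem_toFinset])
  obtain ⟨q, hq⟩ := hpumem
  have hAB : ∀ s t, (fun n => U (pu + n)) s = (fun n => T (q + n)) t → s = 0 ∧ t = 0 := by
    intro s t heq
    simp only at heq
    have hs : s = 0 := by
      have := hpumax (pu + s) ⟨q + t, heq.symm⟩
      omega
    subst hs
    rw [Nat.add_zero, ← hq] at heq
    have := hT.1 heq
    exact ⟨rfl, by omega⟩
  obtain ⟨f, hf, hsub⟩ := glue0 (A := fun n => U (pu + n)) (B := fun n => T (q + n))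
    (isRay_tail hU pu) (isRay_tail hT q)
    (by simpa using hq.symm) hAB
  refine ⟨f, hf, fun e he => ?_⟩
  rcases hsub he with h | h
  · exact Or.inl (rayEdges_tail_subset pu h)
  · exact Or.inr (rayEdges_tail_subset q h)

/-- two disjoint rays joined by a bridge through a third ray give a double ray -/
lemma caseA {R1 S1 S2 : ℕ → V} (hR1 : IsRay G R1) (hS1 : IsRay G S1) (hS2 : IsRay G S2)
    (hd1 : Disjoint (Set.range R1) (Set.range S1))
    (hw1 : (Set.range R1 ∩ Set.range S2).Nonempty)
    (hw2 : (Set.range S1 ∩ Set.range S2).Nonempty) :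
    ∃ f, IsDoubleRay G f ∧ drEdges f ⊆ rayEdges R1 ∪ rayEdges S1 ∪ rayEdges S2 := by
  classical
  obtain ⟨x1, hx1R, p1, hp1⟩ := hw1
  obtain ⟨x2, hx2S, p2, hp2⟩ := hw2
  obtain ⟨L, q, hq0, hqL, hqadj, hqinj, hqrange, hqedges⟩ := raySegPath hS2 p1 p2
  have hq0X : q 0 ∈ Set.range R1 := by rw [hq0, hp1]; exact hx1R
  have hqLY : q L ∈ Set.range S1 := by rw [hqL, hp2]; exact hx2S
  obtain ⟨m, m', hmm', hm'L, hmX, hm'Y, hnoX, hnoY⟩ := extract hd1 hq0X hqLY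
  obtain ⟨am, ham⟩ := hmX
  obtain ⟨bm, hbm⟩ := hm'Y
  set A : ℕ → V := fun n => R1 (am + n) with hA
  set B : ℕ → V := fun n => S1 (bm + n) with hB
  obtain ⟨f, hf, hsub⟩ := glueP (A := A) (B := B) (isRay_tail hR1 am) (isRay_tail hS1 bm)
    (L := m' - m) (by omega) (p := fun i => q (m + i))
    (fun i hi => by
      have := hqadj (m + i) (by omega)
      simpa [show m + (i+1) = m + i + 1 by omega] using this)
    (fun i hi j hj hij => by
      have := hqinj (m + i) (by omega) (m + j) (by omega) hij
      omega)
    (by simp [hA, ham])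
    (by simp [hB, show m + (m' - m) = m' by omega, hbm])
    (fun i h1 h2 hcon => hnoX (m + i) (by omega) (by omega) (range_tail_subset am hcon))
    (fun i h1 hcon => hnoY (m + i) (by omega) (by omega) (range_tail_subset bm hcon))
    (Set.disjoint_of_subset (range_tail_subset am) (range_tail_subset bm) hd1)
  refine ⟨f, hf, fun e he => ?_⟩
  rcases hsub he with (h | h) | h
  · exact Or.inl (Or.inl (rayEdges_tail_subset am h))
  · exact Or.inl (Or.inr (rayEdges_tail_subset bm h))
  · obtain ⟨i, hi, rfl⟩ := h
    right
    have := hqedges (m + i) (by omega)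
    simpa [show m + (i+1) = m + i + 1 by omega] using this


/-- no k+1 rays with pairwise finite intersections -/
lemma thinContra {W : ℕ → V} {k : ℕ} (hdeg : EndVertexDegree G W k)
    (hone : ∀ f : ℕ → V, IsRay G f → RayEquiv G W f)
    (T : Fin (k+1) → ℕ → V) (hray : ∀ a, IsRay G (T a))
    (hfin : ∀ a b : Fin (k+1), a ≠ b → (Set.range (T a) ∩ Set.range (T b)).Finite) :
    False := by
  classical
  have hbnd : ∀ a b : Fin (k+1), ∃ N, ∀ n, a ≠ b → T a n ∈ Set.range (T b) → n < N := by
    intro a b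
    by_cases hab : a = b
    · exact ⟨0, fun n h _ => absurd hab h⟩
    · have hPfin : {n | T a n ∈ Set.range (T b)}.Finite := by
        have heq : {n | T a n ∈ Set.range (T b)} =
            T a ⁻¹' (Set.range (T a) ∩ Set.range (T b)) := by
          ext n; simp [Set.mem_preimage]
        rw [heq]
        exact Set.Finite.preimage (Set.injOn_of_injective (hray a).1) (hfin a b hab)
      refine ⟨hPfin.toFinset.sup id + 1, fun n _ hn => ?_⟩
      have := Finset.le_sup (f := id) ((Set.Finite.mem_toFinset hPfin).2 hn)
      simp only [id] at this
      omega
  choose bnd hbnd using hbnd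
  set N := Finset.univ.sup (fun p : Fin (k+1) × Fin (k+1) => bnd p.1 p.2) with hN
  apply hdeg.2
  refine ⟨fun a n => T a (N + n),
    fun a => ⟨isRay_tail (hray a) N, hone _ (isRay_tail (hray a) N)⟩, ?_⟩
  intro a b hab
  rw [Set.disjoint_left]
  rintro x ⟨s, rfl⟩ ⟨t, ht⟩
  simp only at ht
  have h1 : T a (N + s) ∈ Set.range (T b) := ⟨N + t, ht⟩
  have h2 := hbnd a b (N + s) hab h1
  have h3 : bnd a b ≤ N := by
    rw [hN]
    exact Finset.le_sup (f := fun p : Fin (k+1) × Fin (k+1) => bnd p.1 p.2)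
      (Finset.mem_univ (a, b))
  omega

/-- Claim G : from infinitely many starting vertices on a cluster of pairwise
infinitely-meeting, pairwise edge-disjoint rays, extract an infinite family of
pairwise edge-disjoint rays starting at (a subfamily of) those vertices. -/
lemma claimG (R : ℕ → ℕ → V) (hray : ∀ i, IsRay G (R i))
    (hpair : ∀ i j, i ≠ j → (Set.range (R i) ∩ Set.range (R j)).Infinite)
    (hedis : ∀ i j, i ≠ j → Disjoint (rayEdges (R i)) (rayEdges (R j)))
    (m : ℕ → V) (hminj : Function.Injective m)
    (hmX : ∀ t, ∃ i, m t ∈ Set.range (R i)) :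
    ∃ φ : ℕ → ℕ, Function.Injective φ ∧
      ∃ A : ℕ → ℕ → V,
        (∀ t, IsRay G (A t) ∧ A t 0 = m (φ t) ∧
          Set.range (A t) ⊆ (⋃ i, Set.range (R i)) ∧
          rayEdges (A t) ⊆ (⋃ i, rayEdges (R i))) ∧
        (∀ s t, s ≠ t → Disjoint (rayEdges (A s)) (rayEdges (A t))) := by
  classical
  choose c hc using hmX
  by_cases hfib : ∃ i₀, {t | c t = i₀}.Infinite
  · -- one carrier ray holds infinitely many starting vertices
    obtain ⟨i₀, hi₀⟩ := hfib
    set U := R i₀ with hU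
    -- positions are unbounded
    have hkey : ∀ b : ℕ, ∃ t a, c t = i₀ ∧ U a = m t ∧ b < a := by
      intro b
      -- set of positions of fiber points
      have hposex : ∀ t ∈ {t | c t = i₀}, ∃ a, U a = m t := by
        intro t ht
        have := hc t
        rw [ht] at this
        exact this
      choose! pos hpos using hposex
      have hinj : Set.InjOn pos {t | c t = i₀} := by
        intro s hs t ht hst
        have h1 := hpos s hs
        have h2 := hpos t ht
        rw [hst] at h1
        rw [h1] at h2
        exact hminj h2
      have himg : (pos '' {t | c t = i₀}).Infinite := hi₀.image hinj
      obtain ⟨a, ⟨t, ht, rfl⟩, hab⟩ := himg.exists_gt b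
      exact ⟨t, pos t, ht, hpos t ht, hab⟩
    have hstep : ∀ b j, ∃ t a istar, c t = i₀ ∧ U a = m t ∧ b < a ∧ a ≤ istar ∧
        U istar ∈ Set.range (R (i₀+1+j)) ∧
        (∀ l, a ≤ l → l < istar → U l ∉ Set.range (R (i₀+1+j))) := by
      intro b j
      obtain ⟨t, a, h1, h2, h3⟩ := hkey b
      have hex : ∃ l, a ≤ l ∧ U l ∈ Set.range (R (i₀+1+j)) := by
        obtain ⟨n, q, hn, hq⟩ := inter_unbounded (hray i₀).1 (hpair i₀ (i₀+1+j) (by omega)) a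
        exact ⟨n, hn, ⟨q, hq.symm⟩⟩
      set istar := Nat.find hex with histar
      obtain ⟨hle, hmem⟩ := Nat.find_spec hex
      refine ⟨t, a, istar, h1, h2, h3, hle, hmem, ?_⟩
      intro l hal hl hcon
      exact Nat.find_min hex hl ⟨hal, hcon⟩
    choose ft fa fi hp1 hp2 hp3 hp4 hp5 hp6 using hstep
    set seq : ℕ → ℕ × ℕ × ℕ := fun j => Nat.rec (ft 0 0, fa 0 0, fi 0 0)
      (fun j prev => (ft prev.2.2 (j+1), fa prev.2.2 (j+1), fi prev.2.2 (j+1))) j with hseq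
    have hseqS : ∀ j, seq (j+1) = (ft (seq j).2.2 (j+1), fa (seq j).2.2 (j+1),
        fi (seq j).2.2 (j+1)) := fun j => rfl
    set tj : ℕ → ℕ := fun j => (seq j).1 with htj
    set aj : ℕ → ℕ := fun j => (seq j).2.1 with haj
    set ij : ℕ → ℕ := fun j => (seq j).2.2 with hij
    have hprops : ∀ j, c (tj j) = i₀ ∧ U (aj j) = m (tj j) ∧ aj j ≤ ij j ∧
        U (ij j) ∈ Set.range (R (i₀+1+j)) ∧
        (∀ l, aj j ≤ l → l < ij j → U l ∉ Set.range (R (i₀+1+j))) := by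
      intro j
      cases j with
      | zero => exact ⟨hp1 0 0, hp2 0 0, hp4 0 0, hp5 0 0, hp6 0 0⟩
      | succ n => exact ⟨hp1 _ _, hp2 _ _, hp4 _ _, hp5 _ _, hp6 _ _⟩
    have hgrow : ∀ j, ij j < aj (j+1) := by
      intro j
      have := hp3 (seq j).2.2 (j+1)
      exact this
    have hasc : ∀ s t, s < t → ij s < aj t := by
      intro s t hst
      induction t with
      | zero => omega
      | succ n ihn =>
        rcases Nat.lt_or_ge s n with h | h
        · have h1 := ihn h
          have h2 := (hprops n).2.2.1
          have h3 := hgrow n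
          omega
        · have : s = n := by omega
          subst this
          exact hgrow s
    -- strictly increasing positions give injectivity
    have hamono : ∀ s t, s < t → aj s < aj t := by
      intro s t hst
      have h1 := hasc s t hst
      have h2 := (hprops s).2.2.1
      omega
    have hφinj : Function.Injective tj := by
      intro s t hst
      by_contra hne
      have : m (tj s) = m (tj t) := by rw [hst]
      have h1 := (hprops s).2.1
      have h2 := (hprops t).2.1
      rw [← h1, ← h2] at this
      have := (hray i₀).1 this
      rcases Nat.lt_or_ge s t with h | h
      · have := hamono s t h; omega
      · have hlt : t < s := by omega
        have := hamono t s hlt; omega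
    -- build the rays
    have hbuild : ∀ j, ∃ A : ℕ → V, IsRay G A ∧ A 0 = U (aj j) ∧
        rayEdges A ⊆ {e | ∃ l, aj j ≤ l ∧ l < ij j ∧ e = s(U l, U (l+1))} ∪
          rayEdges (R (i₀+1+j)) ∧
        Set.range A ⊆ Set.range U ∪ Set.range (R (i₀+1+j)) := by
      intro j
      obtain ⟨q, hq⟩ := (hprops j).2.2.2.1
      exact raySwitch (hray i₀) (hray (i₀+1+j)) (hprops j).2.2.1 hq.symm (hprops j).2.2.2.2
    choose A hA1 hA2 hA3 hA4 using hbuild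
    refine ⟨tj, hφinj, A, ?_, ?_⟩
    · intro j
      refine ⟨hA1 j, ?_, ?_, ?_⟩
      · rw [hA2 j, (hprops j).2.1]
      · intro x hx
        rcases hA4 j hx with h | h
        · exact Set.mem_iUnion.2 ⟨i₀, h⟩
        · exact Set.mem_iUnion.2 ⟨i₀+1+j, h⟩
      · intro e he
        rcases hA3 j he with h | h
        · obtain ⟨l, _, _, rfl⟩ := h
          exact Set.mem_iUnion.2 ⟨i₀, ⟨l, rfl⟩⟩
        · exact Set.mem_iUnion.2 ⟨i₀+1+j, h⟩
    · -- pairwise edge-disjointness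
      have hwnd : ∀ s t, s < t → ∀ e, e ∈ rayEdges (A s) → e ∈ rayEdges (A t) → False := by
        intro s t hst e hes het
        rcases hA3 s hes with h1 | h1 <;> rcases hA3 t het with h2 | h2
        · obtain ⟨l, hl1, hl2, rfl⟩ := h1
          obtain ⟨l', hl1', hl2', he⟩ := h2
          rw [Sym2.eq_iff] at he
          have hll' : l < l' := by
            have := hasc s t hst
            omega
          rcases he with ⟨ha, hb⟩ | ⟨ha, hb⟩
          · have := (hray i₀).1 ha; omega
          · have e1 := (hray i₀).1 ha
            have e2 := (hray i₀).1 hb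
            omega
        · obtain ⟨l, hl1, hl2, rfl⟩ := h1
          have hmem : s(U l, U (l+1)) ∈ rayEdges (R i₀) := ⟨l, rfl⟩
          exact Set.disjoint_left.1 (hedis i₀ (i₀+1+t) (by omega)) hmem h2
        · obtain ⟨l', hl1', hl2', rfl⟩ := h2
          have hmem : s(U l', U (l'+1)) ∈ rayEdges (R i₀) := ⟨l', rfl⟩
          exact Set.disjoint_left.1 (hedis i₀ (i₀+1+s) (by omega)) hmem h1
        · exact Set.disjoint_left.1 (hedis (i₀+1+s) (i₀+1+t) (by omega)) h1 h2
      intro s t hst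
      rw [Set.disjoint_left]
      intro e hes het
      rcases Nat.lt_or_ge s t with h | h
      · exact hwnd s t h e hes het
      · exact hwnd t s (by omega) e het hes
  · -- all fibers finite: extract infinitely many distinct carriers
    push_neg at hfib
    have hstep : ∀ used : Finset ℕ, ∃ t, c t ∉ used := by
      intro used
      have hfin : {t | c t ∈ used}.Finite := by
        have : {t | c t ∈ used} ⊆ ⋃ i ∈ used, {t | c t = i} := by
          intro t ht
          exact Set.mem_biUnion ht rfl
        exact Set.Finite.subset (used.finite_toSet.biUnion (fun i _ => hfib i)) this
      obtain ⟨t, ht⟩ := hfin.infinite_compl.nonempty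
      exact ⟨t, ht⟩
    choose pick hpick using hstep
    set seq : ℕ → ℕ × Finset ℕ := fun j => Nat.rec (pick ∅, {c (pick ∅)})
      (fun _ prev => (pick prev.2, insert (c (pick prev.2)) prev.2)) j with hseq
    set φ : ℕ → ℕ := fun j => (seq j).1 with hφ
    have hseqS : ∀ j, seq (j+1) = (pick (seq j).2, insert (c (pick (seq j).2)) (seq j).2) :=
      fun j => rfl
    have hmem2 : ∀ j, c (φ j) ∈ (seq j).2 := by
      intro j
      cases j with
      | zero => simp [hφ, hseq]
      | succ n => rw [hφ, hseqS n]; exact Finset.mem_insert_self _ _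
    have hsub2 : ∀ j, (seq j).2 ⊆ (seq (j+1)).2 := by
      intro j
      rw [hseqS j]
      exact Finset.subset_insert _ _
    have hchain : ∀ s t, s ≤ t → (seq s).2 ⊆ (seq t).2 := by
      intro s t hst
      induction t with
      | zero => have : s = 0 := by omega
                subst this; exact subset_rfl
      | succ n ihn =>
        rcases Nat.lt_or_ge s (n+1) with h | h
        · exact (ihn (by omega)).trans (hsub2 n)
        · have : s = n+1 := by omega
          subst this; exact subset_rfl
    have hnotmem : ∀ j, c (φ (j+1)) ∉ (seq j).2 := by
      intro j
      show c ((seq (j+1)).1) ∉ (seq j).2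
      rw [hseqS j]
      exact hpick (seq j).2
    have hcinj : ∀ s t, s < t → c (φ s) ≠ c (φ t) := by
      intro s t hst heq
      have h1 : c (φ s) ∈ (seq s).2 := hmem2 s
      have h2 : c (φ s) ∈ (seq (t-1)).2 := hchain s (t-1) (by omega) h1
      have h3 : c (φ t) ∉ (seq (t-1)).2 := by
        have := hnotmem (t-1)
        rw [show t - 1 + 1 = t by omega] at this
        exact this
      rw [← heq] at h3
      exact h3 h2
    have hφinj : Function.Injective φ := by
      intro s t hst
      by_contra hne
      rcases Nat.lt_or_ge s t with h | h
      · exact hcinj s t h (by rw [hst])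
      · exact hcinj t s (by omega) (by rw [hst])
    -- tails of distinct carrier rays
    have hbuild : ∀ j, ∃ n, R (c (φ j)) n = m (φ j) := fun j => hc (φ j)
    choose posn hposn using hbuild
    refine ⟨φ, hφinj, fun j n => R (c (φ j)) (posn j + n), ?_, ?_⟩
    · intro j
      refine ⟨isRay_tail (hray _) _, by simp [hposn j], ?_, ?_⟩
      · intro x hx
        exact Set.mem_iUnion.2 ⟨c (φ j), range_tail_subset _ hx⟩
      · intro e he
        exact Set.mem_iUnion.2 ⟨c (φ j), rayEdges_tail_subset _ he⟩
    · intro s t hst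
      have hne : c (φ s) ≠ c (φ t) := by
        rcases Nat.lt_or_ge s t with h | h
        · exact hcinj s t h
        · exact fun heq => hcinj t s (by omega) heq.symm
      exact Set.disjoint_of_subset (rayEdges_tail_subset _) (rayEdges_tail_subset _)
        (hedis _ _ hne)

/-- a sequence of pairwise vertex-disjoint bridges from `X` to `Y` -/
lemma bridges [DecidableEq V] {W : ℕ → V} (hW : IsRay G W)
    (hone : ∀ f : ℕ → V, IsRay G f → RayEquiv G W f)
    {r0 s0 : ℕ → V} (hr0 : IsRay G r0) (hs0 : IsRay G s0)
    {X Y : Set V} (hXY : Disjoint X Y)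
    (hr0X : Set.range r0 ⊆ X) (hs0Y : Set.range s0 ⊆ Y) :
    ∃ (ℓ : ℕ → ℕ) (q : ℕ → ℕ → V),
      (∀ t, 1 ≤ ℓ t ∧ q t 0 ∈ X ∧ q t (ℓ t) ∈ Y ∧
        (∀ i < ℓ t, G.Adj (q t i) (q t (i+1))) ∧
        (∀ i ≤ ℓ t, ∀ j ≤ ℓ t, q t i = q t j → i = j) ∧
        (∀ i, 0 < i → i ≤ ℓ t → q t i ∉ X) ∧ (∀ i, i < ℓ t → q t i ∉ Y)) ∧
      (∀ s t, s < t → ∀ i ≤ ℓ s, ∀ j ≤ ℓ t, q s i ≠ q t j) := by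
  classical
  have hstep : ∀ Z : Finset V, ∃ d : ℕ × (ℕ → V),
      1 ≤ d.1 ∧ d.2 0 ∈ X ∧ d.2 d.1 ∈ Y ∧
      (∀ i < d.1, G.Adj (d.2 i) (d.2 (i+1))) ∧
      (∀ i ≤ d.1, ∀ j ≤ d.1, d.2 i = d.2 j → i = j) ∧
      (∀ i, 0 < i → i ≤ d.1 → d.2 i ∉ X) ∧ (∀ i, i < d.1 → d.2 i ∉ Y) ∧
      (∀ i ≤ d.1, d.2 i ∉ Z) := by
    intro Z
    obtain ⟨a, b, w, hw⟩ := connect hW hone hr0 hs0 Z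
    obtain ⟨L, p, hp0, hpL, hpadj, hpinj, hpsup⟩ := walk_to_finpath w
    have hp0X : p 0 ∈ X := by rw [hp0]; exact hr0X ⟨a, rfl⟩
    have hpLY : p L ∈ Y := by rw [hpL]; exact hs0Y ⟨b, rfl⟩
    obtain ⟨m, m', hmm', hm'L, hmX, hm'Y, hnoX, hnoY⟩ := extract hXY hp0X hpLY
    refine ⟨(m' - m, fun i => p (m + i)), by omega, by simpa using hmX, ?_, ?_, ?_, ?_, ?_, ?_⟩
    · simpa [show m + (m' - m) = m' by omega] using hm'Y
    · intro i hi
      have := hpadj (m + i) (by omega)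
      simpa [show m + (i+1) = m + i + 1 by omega] using this
    · intro i hi j hj hij
      have := hpinj (m + i) (by omega) (m + j) (by omega) hij
      omega
    · intro i h1 h2
      exact hnoX (m + i) (by omega) (by omega)
    · intro i h1
      exact hnoY (m + i) (by omega) (by omega)
    · intro i hi
      exact hw _ (hpsup (m + i) (by omega))
  choose step hstep1 hstep2 hstep3 hstep4 hstep5 hstep6 hstep7 hstep8 using hstep
  set Zs : ℕ → Finset V := fun t => Nat.rec ∅
    (fun _ Z => Z ∪ (Finset.range ((step Z).1 + 1)).image (step Z).2) t with hZs
  have hZsS : ∀ t, Zs (t+1) = Zs t ∪ (Finset.range ((step (Zs t)).1 + 1)).image (step (Zs t)).2 :=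
    fun t => rfl
  set ℓ : ℕ → ℕ := fun t => (step (Zs t)).1 with hℓ
  set q : ℕ → ℕ → V := fun t => (step (Zs t)).2 with hq
  have hmono : ∀ s t, s ≤ t → Zs s ⊆ Zs t := by
    intro s t hst
    induction t with
    | zero => have : s = 0 := by omega
              subst this; exact subset_rfl
    | succ n ihn =>
      rcases Nat.lt_or_ge s (n+1) with h | h
      · refine (ihn (by omega)).trans ?_
        rw [hZsS n]
        exact Finset.subset_union_left
      · have : s = n+1 := by omega
        subst this; exact subset_rfl
  refine ⟨ℓ, q, fun t => ⟨hstep1 _, hstep2 _, hstep3 _, hstep4 _, hstep5 _, hstep6 _, hstep7 _⟩,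
    ?_⟩
  intro s t hst i hi j hj heq
  have hin : q s i ∈ Zs (s+1) := by
    rw [hZsS s]
    apply Finset.mem_union_right
    refine Finset.mem_image.2 ⟨i, Finset.mem_range.2 ?_, rfl⟩
    have : i ≤ (step (Zs s)).1 := hi
    omega
  have hin2 : q s i ∈ Zs t := hmono (s+1) t (by omega) hin
  rw [heq] at hin2
  exact hstep8 (Zs t) j hj hin2


/-- Case B : clean split into two vertex-disjoint clusters. -/
lemma caseB {W : ℕ → V} (hW : IsRay G W)
    (hone : ∀ f : ℕ → V, IsRay G f → RayEquiv G W f)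
    (Rf Sf : ℕ → ℕ → V)
    (hrayR : ∀ i, IsRay G (Rf i)) (hrayS : ∀ i, IsRay G (Sf i))
    (hdisj : ∀ i j, Disjoint (Set.range (Rf i)) (Set.range (Sf j)))
    (hRR : ∀ i j, i ≠ j → (Set.range (Rf i) ∩ Set.range (Rf j)).Infinite)
    (hSS : ∀ i j, i ≠ j → (Set.range (Sf i) ∩ Set.range (Sf j)).Infinite)
    (hedisRR : ∀ i j, i ≠ j → Disjoint (rayEdges (Rf i)) (rayEdges (Rf j)))
    (hedisSS : ∀ i j, i ≠ j → Disjoint (rayEdges (Sf i)) (rayEdges (Sf j))) :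
    ∃ D : ℕ → ℤ → V, (∀ t, IsDoubleRay G (D t)) ∧
      Pairwise fun s t => Disjoint (drEdges (D s)) (drEdges (D t)) := by
  classical
  set X : Set V := ⋃ i, Set.range (Rf i) with hX
  set Y : Set V := ⋃ i, Set.range (Sf i) with hY
  have hXY : Disjoint X Y := by
    rw [Set.disjoint_left]
    rintro x hx hy
    obtain ⟨i, hi⟩ := Set.mem_iUnion.1 hx
    obtain ⟨j, hj⟩ := Set.mem_iUnion.1 hy
    exact Set.disjoint_left.1 (hdisj i j) hi hj
  -- edges of the two clusters are disjoint
  have hXYedge : ∀ i j, Disjoint (rayEdges (Rf i)) (rayEdges (Sf j)) := by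
    intro i j
    rw [Set.disjoint_left]
    rintro e ⟨n, rfl⟩ he2
    have h1 := (rayEdges_endpoints (f := Sf j) he2).1
    exact Set.disjoint_left.1 (hdisj i j) ⟨n, rfl⟩ h1
  obtain ⟨ℓ, q, hq, hqd⟩ := bridges hW hone (hrayR 0) (hrayS 0) hXY
    (fun x hx => Set.mem_iUnion.2 ⟨0, hx⟩) (fun x hx => Set.mem_iUnion.2 ⟨0, hx⟩)
  -- bridge edges touch neither cluster's edges
  have hbredge : ∀ t i, i < ℓ t →
      (∀ a, s(q t i, q t (i+1)) ∉ rayEdges (Rf a)) ∧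
      (∀ a, s(q t i, q t (i+1)) ∉ rayEdges (Sf a)) := by
    intro t i hi
    obtain ⟨h1, h2, h3, _, _, h6, h7⟩ := hq t
    constructor
    · intro a hcon
      have := (rayEdges_endpoints hcon).2
      have hX2 : q t (i+1) ∈ X := Set.mem_iUnion.2 ⟨a, this⟩
      rcases Nat.lt_or_ge (i+1) (ℓ t) with h | h
      · exact h6 (i+1) (by omega) (by omega) hX2
      · have : i + 1 = ℓ t := by omega
        rw [this] at hX2
        exact Set.disjoint_left.1 hXY hX2 h3
    · intro a hcon
      have := (rayEdges_endpoints hcon).1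
      have hY2 : q t i ∈ Y := Set.mem_iUnion.2 ⟨a, this⟩
      rcases Nat.eq_zero_or_pos i with h | h
      · subst h
        exact Set.disjoint_left.1 hXY h2 hY2
      · exact h7 i hi hY2
  -- X-side rays
  have hminj : Function.Injective (fun t => q t 0) := by
    intro s t hst
    by_contra hne
    rcases Nat.lt_or_ge s t with h | h
    · exact hqd s t h 0 (by omega) 0 (by omega) hst
    · exact hqd t s (by omega) 0 (by omega) 0 (by omega) hst.symm
  obtain ⟨φ₁, hφ₁, A, hA, hAd⟩ := claimG Rf hrayR hRR hedisRR (fun t => q t 0) hminj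
    (fun t => Set.mem_iUnion.1 (hq t).2.1)
  -- Y-side rays
  have hm'inj : Function.Injective (fun t => q (φ₁ t) (ℓ (φ₁ t))) := by
    intro s t hst
    by_contra hne
    have hne2 : φ₁ s ≠ φ₁ t := fun hcon => hne (hφ₁ hcon)
    rcases Nat.lt_or_ge (φ₁ s) (φ₁ t) with h | h
    · exact hqd _ _ h _ (le_refl _) _ (le_refl _) hst
    · exact hqd _ _ (by omega) _ (le_refl _) _ (le_refl _) hst.symm
  obtain ⟨φ₂, hφ₂, B, hB, hBd⟩ := claimG Sf hrayS hSS hedisSS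
    (fun t => q (φ₁ t) (ℓ (φ₁ t))) hm'inj
    (fun t => Set.mem_iUnion.1 (hq (φ₁ t)).2.2.1)
  -- assemble
  set β : ℕ → ℕ := fun t => φ₁ (φ₂ t) with hβ
  have hβinj : Function.Injective β := hφ₁.comp hφ₂
  have hbuild : ∀ t, ∃ f : ℤ → V, IsDoubleRay G f ∧
      drEdges f ⊆ (rayEdges (A (φ₂ t)) ∪ rayEdges (B t)) ∪
        {e | ∃ i, i < ℓ (β t) ∧ e = s(q (β t) i, q (β t) (i+1))} := by
    intro t
    obtain ⟨hb1, hb2, hb3, hb4, hb5, hb6, hb7⟩ := hq (β t)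
    obtain ⟨hA1, hA2, hA3, hA4⟩ := hA (φ₂ t)
    obtain ⟨hB1, hB2, hB3, hB4⟩ := hB t
    refine glueP hA1 hB1 (L := ℓ (β t)) (by omega) hb4 hb5 ?_ ?_ ?_ ?_ ?_
    · rw [hA2]
    · rw [hB2]
    · intro i h1 h2 hcon
      exact hb6 i h1 h2 (hA3 hcon)
    · intro i h1 hcon
      exact hb7 i h1 (hB3 hcon)
    · exact Set.disjoint_of_subset hA3 hB3 hXY
  choose D hD1 hD2 using hbuild
  refine ⟨D, hD1, ?_⟩
  intro s t hst
  rw [Set.disjoint_left]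
  intro e hes het
  have hs' := hD2 s hes
  have ht' := hD2 t het
  have hqne : ∀ i j, i ≤ ℓ (β s) → j ≤ ℓ (β t) → q (β s) i ≠ q (β t) j := by
    intro i j hi hj
    have hne : β s ≠ β t := fun hcon => hst (hβinj hcon)
    rcases Nat.lt_or_ge (β s) (β t) with h | h
    · exact hqd _ _ h i hi j hj
    · intro hcon
      exact hqd _ _ (by omega) j hj i hi hcon.symm
  rcases hs' with (hsA | hsB) | hsQ <;> rcases ht' with (htA | htB) | htQ
  · exact Set.disjoint_left.1 (hAd _ _ (fun hcon => hst (hφ₂ hcon))) hsA htA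
  · obtain ⟨a, ha⟩ := Set.mem_iUnion.1 ((hA (φ₂ s)).2.2.2 hsA)
    obtain ⟨b, hb⟩ := Set.mem_iUnion.1 ((hB t).2.2.2 htB)
    exact Set.disjoint_left.1 (hXYedge a b) ha hb
  · obtain ⟨a, ha⟩ := Set.mem_iUnion.1 ((hA (φ₂ s)).2.2.2 hsA)
    obtain ⟨i, hi, rfl⟩ := htQ
    exact (hbredge (β t) i hi).1 a ha
  · obtain ⟨b, hb⟩ := Set.mem_iUnion.1 ((hB s).2.2.2 hsB)
    obtain ⟨a, ha⟩ := Set.mem_iUnion.1 ((hA (φ₂ t)).2.2.2 htA)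
    exact Set.disjoint_left.1 (hXYedge a b) ha hb
  · exact Set.disjoint_left.1 (hBd s t hst) hsB htB
  · obtain ⟨b, hb⟩ := Set.mem_iUnion.1 ((hB s).2.2.2 hsB)
    obtain ⟨i, hi, rfl⟩ := htQ
    exact (hbredge (β t) i hi).2 b hb
  · obtain ⟨a, ha⟩ := Set.mem_iUnion.1 ((hA (φ₂ t)).2.2.2 htA)
    obtain ⟨i, hi, rfl⟩ := hsQ
    exact (hbredge (β s) i hi).1 a ha
  · obtain ⟨b, hb⟩ := Set.mem_iUnion.1 ((hB t).2.2.2 htB)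
    obtain ⟨i, hi, rfl⟩ := hsQ
    exact (hbredge (β s) i hi).2 b hb
  · obtain ⟨i, hi, he1⟩ := hsQ
    obtain ⟨j, hj, he2⟩ := htQ
    rw [he1] at he2
    rw [Sym2.eq_iff] at he2
    rcases he2 with ⟨h1, h2⟩ | ⟨h1, h2⟩
    · exact hqne i j (by omega) (by omega) h1
    · exact hqne i (j+1) (by omega) (by omega) h1


end GraphLemmas

end DRProof

/-- A locally finite graph with exactly one end, which is thin, containing
infinitely many pairwise edge-disjoint `2`-rays contains infinitely many pairwise
edge-disjoint double rays. -/
theorem stmt_13 (G : SimpleGraph V)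
    (hlf : ∀ v : V, (G.neighborSet v).Finite)
    (W : ℕ → V) (k : ℕ) (hW : IsRay G W) (hdeg : EndVertexDegree G W k)
    (hone : ∀ f : ℕ → V, IsRay G f → RayEquiv G W f)
    (h : ∃ F : ℕ → (ℕ → V) × (ℕ → V), (∀ i, Is2Ray G (F i)) ∧
      Pairwise fun i j => Disjoint (twoRayEdges (F i)) (twoRayEdges (F j))) :
    ∃ F : ℕ → ℤ → V, (∀ i, IsDoubleRay G (F i)) ∧
      Pairwise fun i j => Disjoint (drEdges (F i)) (drEdges (F j)) := by
  classical
  open DRProof in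
  obtain ⟨Fam, hFam, hFamd⟩ := h
  set R0 : ℕ → ℕ → V := fun i => (Fam i).1 with hR0
  set S0 : ℕ → ℕ → V := fun i => (Fam i).2 with hS0
  have hrayR0 : ∀ i, IsRay G (R0 i) := fun i => (hFam i).1
  have hrayS0 : ∀ i, IsRay G (S0 i) := fun i => (hFam i).2.1
  have hpart0 : ∀ i, Disjoint (Set.range (R0 i)) (Set.range (S0 i)) := fun i => (hFam i).2.2
  set b : Prop → Bool := fun P => @decide P (Classical.propDecidable P) with hbdef
  have hb : ∀ P : Prop, b P = true ↔ P := by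
    intro P
    constructor
    · intro hx
      exact of_decide_eq_true hx
    · intro hx
      exact decide_eq_true hx
  obtain ⟨g, hg, d, hd⟩ := ramsey2 (fun i j =>
    (b ((Set.range (R0 i) ∩ Set.range (S0 j)).Nonempty),
     b ((Set.range (R0 i) ∩ Set.range (S0 j)).Infinite),
     b ((Set.range (S0 i) ∩ Set.range (R0 j)).Nonempty),
     b ((Set.range (S0 i) ∩ Set.range (R0 j)).Infinite),
     b ((Set.range (R0 i) ∩ Set.range (R0 j)).Infinite),
     b ((Set.range (S0 i) ∩ Set.range (S0 j)).Infinite)))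
  obtain ⟨d1, d2, d3, d4, d5, d6⟩ := d
  set R : ℕ → ℕ → V := fun i => R0 (g i) with hR
  set S : ℕ → ℕ → V := fun i => S0 (g i) with hS
  have hrayR : ∀ i, IsRay G (R i) := fun i => hrayR0 (g i)
  have hrayS : ∀ i, IsRay G (S i) := fun i => hrayS0 (g i)
  have hpart : ∀ i, Disjoint (Set.range (R i)) (Set.range (S i)) := fun i => hpart0 (g i)
  have hcomp : ∀ i j, i < j →
      (((Set.range (R i) ∩ Set.range (S j)).Nonempty ↔ d1 = true) ∧
       ((Set.range (R i) ∩ Set.range (S j)).Infinite ↔ d2 = true) ∧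
       ((Set.range (S i) ∩ Set.range (R j)).Nonempty ↔ d3 = true) ∧
       ((Set.range (S i) ∩ Set.range (R j)).Infinite ↔ d4 = true) ∧
       ((Set.range (R i) ∩ Set.range (R j)).Infinite ↔ d5 = true) ∧
       ((Set.range (S i) ∩ Set.range (S j)).Infinite ↔ d6 = true)) := by
    intro i j hij
    have hdd := hd i j hij
    simp only [Prod.mk.injEq] at hdd
    obtain ⟨h1, h2, h3, h4, h5, h6⟩ := hdd
    exact ⟨by rw [← h1, hb], by rw [← h2, hb], by rw [← h3, hb],
      by rw [← h4, hb], by rw [← h5, hb], by rw [← h6, hb]⟩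
  -- edge disjointness of the refined family
  have hedis : ∀ i j, i ≠ j →
      Disjoint (twoRayEdges (Fam (g i))) (twoRayEdges (Fam (g j))) :=
    fun i j hij => hFamd (hg.injective.ne hij)
  have hsubR : ∀ i, rayEdges (R i) ⊆ twoRayEdges (Fam (g i)) := fun i => Set.subset_union_left
  have hsubS : ∀ i, rayEdges (S i) ⊆ twoRayEdges (Fam (g i)) := fun i => Set.subset_union_right
  have hedisRR : ∀ i j, i ≠ j → Disjoint (rayEdges (R i)) (rayEdges (R j)) :=
    fun i j hij => Set.disjoint_of_subset (hsubR i) (hsubR j) (hedis i j hij)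
  have hedisSS : ∀ i j, i ≠ j → Disjoint (rayEdges (S i)) (rayEdges (S j)) :=
    fun i j hij => Set.disjoint_of_subset (hsubS i) (hsubS j) (hedis i j hij)
  -- thinness forces d5 and d6
  have hd5 : d5 = true := by
    by_contra hfalse
    refine thinContra hdeg hone (fun a : Fin (k+1) => R (a : ℕ))
      (fun a => hrayR _) ?_
    intro a c hac
    have hvne : (a : ℕ) ≠ (c : ℕ) := fun hcon => hac (Fin.val_injective hcon)
    rcases Nat.lt_or_ge (a : ℕ) (c : ℕ) with hlt | hge
    · apply Set.not_infinite.1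
      intro hcon
      exact hfalse (((hcomp _ _ hlt).2.2.2.2.1).1 hcon)
    · have hlt : (c : ℕ) < (a : ℕ) := by omega
      apply Set.not_infinite.1
      intro hcon
      rw [Set.inter_comm] at hcon
      exact hfalse (((hcomp _ _ hlt).2.2.2.2.1).1 hcon)
  have hd6 : d6 = true := by
    by_contra hfalse
    refine thinContra hdeg hone (fun a : Fin (k+1) => S (a : ℕ))
      (fun a => hrayS _) ?_
    intro a c hac
    have hvne : (a : ℕ) ≠ (c : ℕ) := fun hcon => hac (Fin.val_injective hcon)
    rcases Nat.lt_or_ge (a : ℕ) (c : ℕ) with hlt | hge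
    · apply Set.not_infinite.1
      intro hcon
      exact hfalse (((hcomp _ _ hlt).2.2.2.2.2).1 hcon)
    · have hlt : (c : ℕ) < (a : ℕ) := by omega
      apply Set.not_infinite.1
      intro hcon
      rw [Set.inter_comm] at hcon
      exact hfalse (((hcomp _ _ hlt).2.2.2.2.2).1 hcon)
  -- assembling per-pair constructions
  have assemble : (∀ t, ∃ f : ℤ → V, IsDoubleRay G f ∧
      drEdges f ⊆ twoRayEdges (Fam (g (2*t))) ∪ twoRayEdges (Fam (g (2*t+1)))) →
      ∃ F : ℕ → ℤ → V, (∀ i, IsDoubleRay G (F i)) ∧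
        Pairwise fun i j => Disjoint (drEdges (F i)) (drEdges (F j)) := by
    intro hbuild
    choose D hD1 hD2 using hbuild
    refine ⟨D, hD1, ?_⟩
    intro s t hst
    apply Set.disjoint_of_subset (hD2 s) (hD2 t)
    rw [Set.disjoint_union_left]
    constructor <;> rw [Set.disjoint_union_right] <;> constructor <;>
      · apply hFamd
        apply hg.injective.ne
        omega
  by_cases hcd2 : d2 = true
  · -- R i meets S j infinitely often : bridge through S (2t+1)
    apply assemble
    intro t
    have hlt : 2*t < 2*t+1 := by omega
    have h1 : (Set.range (R (2*t)) ∩ Set.range (S (2*t+1))).Nonempty :=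
      (((hcomp _ _ hlt).2.1).2 hcd2).nonempty
    have h2 : (Set.range (S (2*t)) ∩ Set.range (S (2*t+1))).Nonempty :=
      (((hcomp _ _ hlt).2.2.2.2.2).2 hd6).nonempty
    obtain ⟨f, hf1, hf2⟩ := caseA (hrayR (2*t)) (hrayS (2*t)) (hrayS (2*t+1))
      (hpart (2*t)) h1 h2
    refine ⟨f, hf1, fun e he => ?_⟩
    rcases hf2 he with (he1 | he1) | he1
    · exact Or.inl (hsubR _ he1)
    · exact Or.inl (hsubS _ he1)
    · exact Or.inr (hsubS _ he1)
  by_cases hcd4 : d4 = true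
  · -- S i meets R j infinitely often : bridge through R (2t+1)
    apply assemble
    intro t
    have hlt : 2*t < 2*t+1 := by omega
    have h1 : (Set.range (S (2*t)) ∩ Set.range (R (2*t+1))).Nonempty :=
      (((hcomp _ _ hlt).2.2.2.1).2 hcd4).nonempty
    have h2 : (Set.range (R (2*t)) ∩ Set.range (R (2*t+1))).Nonempty :=
      (((hcomp _ _ hlt).2.2.2.2.1).2 hd5).nonempty
    obtain ⟨f, hf1, hf2⟩ := caseA (hrayS (2*t)) (hrayR (2*t)) (hrayR (2*t+1))
      (hpart (2*t)).symm h1 h2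
    refine ⟨f, hf1, fun e he => ?_⟩
    rcases hf2 he with (he1 | he1) | he1
    · exact Or.inl (hsubS _ he1)
    · exact Or.inl (hsubR _ he1)
    · exact Or.inr (hsubR _ he1)
  by_cases hcd1 : d1 = true
  · -- R i meets S j finitely but non-trivially : double ray inside two rays
    apply assemble
    intro t
    have hlt : 2*t < 2*t+1 := by omega
    have h1 : (Set.range (R (2*t)) ∩ Set.range (S (2*t+1))).Nonempty :=
      ((hcomp _ _ hlt).1).2 hcd1
    have h2 : (Set.range (R (2*t)) ∩ Set.range (S (2*t+1))).Finite := by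
      apply Set.not_infinite.1
      intro hcon
      exact hcd2 (((hcomp _ _ hlt).2.1).1 hcon)
    obtain ⟨f, hf1, hf2⟩ := caseFin (hrayR (2*t)) (hrayS (2*t+1)) h2 h1
    refine ⟨f, hf1, fun e he => ?_⟩
    rcases hf2 he with he1 | he1
    · exact Or.inl (hsubR _ he1)
    · exact Or.inr (hsubS _ he1)
  by_cases hcd3 : d3 = true
  · apply assemble
    intro t
    have hlt : 2*t < 2*t+1 := by omega
    have h1 : (Set.range (S (2*t)) ∩ Set.range (R (2*t+1))).Nonempty :=
      ((hcomp _ _ hlt).2.2.1).2 hcd3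
    have h2 : (Set.range (S (2*t)) ∩ Set.range (R (2*t+1))).Finite := by
      apply Set.not_infinite.1
      intro hcon
      exact hcd4 (((hcomp _ _ hlt).2.2.2.1).1 hcon)
    obtain ⟨f, hf1, hf2⟩ := caseFin (hrayS (2*t)) (hrayR (2*t+1)) h2 h1
    refine ⟨f, hf1, fun e he => ?_⟩
    rcases hf2 he with he1 | he1
    · exact Or.inl (hsubS _ he1)
    · exact Or.inr (hsubR _ he1)
  -- clean split
  have hdisjRS : ∀ i j, Disjoint (Set.range (R i)) (Set.range (S j)) := by
    intro i j
    rcases lt_trichotomy i j with hlt | heq | hgt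
    · rw [Set.disjoint_iff_inter_eq_empty]
      by_contra hcon
      exact hcd1 (((hcomp _ _ hlt).1).1 (Set.nonempty_iff_ne_empty.2 hcon))
    · subst heq; exact hpart i
    · rw [Set.disjoint_iff_inter_eq_empty]
      by_contra hcon
      have hne : (Set.range (S j) ∩ Set.range (R i)).Nonempty := by
        rw [Set.inter_comm]
        exact Set.nonempty_iff_ne_empty.2 hcon
      exact hcd3 (((hcomp _ _ hgt).2.2.1).1 hne)
  have hRRinf : ∀ i j, i ≠ j → (Set.range (R i) ∩ Set.range (R j)).Infinite := by
    intro i j hij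
    rcases Nat.lt_or_ge i j with hlt | hge
    · exact ((hcomp _ _ hlt).2.2.2.2.1).2 hd5
    · have hlt : j < i := by omega
      rw [Set.inter_comm]
      exact ((hcomp _ _ hlt).2.2.2.2.1).2 hd5
  have hSSinf : ∀ i j, i ≠ j → (Set.range (S i) ∩ Set.range (S j)).Infinite := by
    intro i j hij
    rcases Nat.lt_or_ge i j with hlt | hge
    · exact ((hcomp _ _ hlt).2.2.2.2.2).2 hd6
    · have hlt : j < i := by omega
      rw [Set.inter_comm]
      exact ((hcomp _ _ hlt).2.2.2.2.2).2 hd6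
  exact caseB hW hone R S hrayR hrayS hdisjRS hRRinf hSSinf hedisRR hedisSS
end

section
/- Let G be a graph with finitely many ends, each of finite vertex-degree, such that G has arbitrarily many pairwise edge-disjoint double rays. Then there exist ends ω, ω' of G (not necessarily distinct) such that G has arbitrarily many pairwise edge-disjoint double rays each of which converges exactly to ω and ω'. -/
open SimpleGraph

variable {V : Type*}

/-- The double ray `D` converges exactly to the ends represented by `W₁` and `W₂`
(not necessarily distinct): its two constituent rays lie in those ends. -/
def ConvBoth (G : SimpleGraph V) (W₁ W₂ : ℕ → V) (D : ℤ → V) : Prop :=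
  (RayEquiv G W₁ (drFwd D) ∧ RayEquiv G W₂ (drBwd D)) ∨
  (RayEquiv G W₁ (drBwd D) ∧ RayEquiv G W₂ (drFwd D))

lemma isRay_drFwd {G : SimpleGraph V} {f : ℤ → V} (hf : IsDoubleRay G f) :
    IsRay G (drFwd f) := by
  constructor
  · intro a b hab
    have := hf.1 hab
    exact_mod_cast this
  · intro n
    have := hf.2 (n : ℤ)
    simpa [drFwd, Nat.cast_add] using this

lemma isRay_drBwd {G : SimpleGraph V} {f : ℤ → V} (hf : IsDoubleRay G f) :
    IsRay G (drBwd f) := by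
  constructor
  · intro a b hab
    have := hf.1 hab
    omega
  · intro n
    have h2 := (hf.2 (-(n : ℤ) - 2)).symm
    show G.Adj (f (-(n : ℤ) - 1)) (f (-((n + 1 : ℕ) : ℤ) - 1))
    convert h2 using 2 <;> push_cast <;> ring

/-- In a graph with finitely many ends, all thin, with arbitrarily many pairwise
edge-disjoint double rays, some pair of ends (not necessarily distinct) is joined
by arbitrarily many pairwise edge-disjoint double rays converging exactly to them. -/
theorem stmt_16 (G : SimpleGraph V)
    (N : ℕ) (E : Fin N → ℕ → V) (hE : ∀ i, IsRay G (E i))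
    (hall : ∀ f : ℕ → V, IsRay G f → ∃ i, RayEquiv G (E i) f)
    (hthin : ∀ f : ℕ → V, IsRay G f → ∃ k, EndVertexDegree G f k)
    (h : ∀ k : ℕ, ∃ F : Fin k → ℤ → V, (∀ i, IsDoubleRay G (F i)) ∧
      Pairwise fun i j => Disjoint (drEdges (F i)) (drEdges (F j))) :
    ∃ W W' : ℕ → V, IsRay G W ∧ IsRay G W' ∧
      ∀ k : ℕ, ∃ F : Fin k → ℤ → V,
        (∀ i, IsDoubleRay G (F i) ∧ ConvBoth G W W' (F i)) ∧
        Pairwise fun i j => Disjoint (drEdges (F i)) (drEdges (F j)) := by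
  classical
  rcases Nat.eq_zero_or_pos N with hN | hN
  · exfalso
    obtain ⟨F, hF, -⟩ := h 1
    obtain ⟨i, -⟩ := hall (drFwd (F 0)) (isRay_drFwd (hF 0))
    subst hN; exact i.elim0
  have key : ∃ p : Fin N × Fin N, ∀ k : ℕ, ∃ F : Fin k → ℤ → V,
      (∀ i, IsDoubleRay G (F i) ∧ ConvBoth G (E p.1) (E p.2) (F i)) ∧
      Pairwise fun i j => Disjoint (drEdges (F i)) (drEdges (F j)) := by
    by_contra hcon
    have hkf : ∀ p : Fin N × Fin N, ∃ kp : ℕ, ¬ ∃ F : Fin kp → ℤ → V,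
        (∀ i, IsDoubleRay G (F i) ∧ ConvBoth G (E p.1) (E p.2) (F i)) ∧
        Pairwise fun i j => Disjoint (drEdges (F i)) (drEdges (F j)) := by
      intro p
      by_contra hh
      push_neg at hh
      exact hcon ⟨p, hh⟩
    choose kf hkf2 using hkf
    set K := ∑ p : Fin N × Fin N, kf p with hK
    obtain ⟨F, hFr, hFp⟩ := h K
    have hc : ∀ i : Fin K, ∃ p : Fin N × Fin N,
        RayEquiv G (E p.1) (drFwd (F i)) ∧ RayEquiv G (E p.2) (drBwd (F i)) := by
      intro i
      obtain ⟨a, ha⟩ := hall _ (isRay_drFwd (hFr i))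
      obtain ⟨b, hb⟩ := hall _ (isRay_drBwd (hFr i))
      exact ⟨(a, b), ha, hb⟩
    choose c hc1 hc2 using hc
    have hcard : ∀ p : Fin N × Fin N,
        (Finset.univ.filter fun i => c i = p).card < kf p := by
      intro p
      by_contra hle
      push_neg at hle
      obtain ⟨t, hts, htc⟩ := Finset.exists_subset_card_eq hle
      set g : Fin (kf p) → Fin K := fun j => (t.equivFin.symm (Fin.cast htc.symm j) : Fin K)
        with hg
      have hginj : Function.Injective g := by
        intro a b hab
        have := t.equivFin.symm.injective (Subtype.ext hab)
        have := Fin.cast_injective htc.symm this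
        exact this
      have hgp : ∀ j, c (g j) = p := by
        intro j
        have hmem := (t.equivFin.symm (Fin.cast htc.symm j)).2
        have := hts hmem
        exact (Finset.mem_filter.mp this).2
      refine hkf2 p ⟨fun j => F (g j), fun j => ⟨hFr (g j), Or.inl ⟨?_, ?_⟩⟩,
        fun a b hab => hFp (hginj.ne hab)⟩
      · have hh := hc1 (g j); rw [hgp j] at hh; exact hh
      · have hh := hc2 (g j); rw [hgp j] at hh; exact hh
    have hsum : (Finset.univ : Finset (Fin K)).card =
        ∑ p : Fin N × Fin N, (Finset.univ.filter fun i => c i = p).card :=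
      Finset.card_eq_sum_card_fiberwise (fun x _ => Finset.mem_univ (c x))
    haveI : Nonempty (Fin N × Fin N) := ⟨(⟨0, hN⟩, ⟨0, hN⟩)⟩
    have hlt : K < K := by
      calc K = (Finset.univ : Finset (Fin K)).card := by simp
        _ = ∑ p : Fin N × Fin N, (Finset.univ.filter fun i => c i = p).card := hsum
        _ < ∑ p : Fin N × Fin N, kf p :=
            Finset.sum_lt_sum_of_nonempty Finset.univ_nonempty (fun p _ => hcard p)
        _ = K := hK.symm
    exact lt_irrefl _ hlt
  obtain ⟨p, hp⟩ := key
  exact ⟨E p.1, E p.2, hE p.1, hE p.2, hp⟩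
end
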